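/- In any execution of the AllConcur+ state machine, if a state with epoch e and unreliable round type (U or U▷) occurs at some position, then every later state of the execution having epoch e also has unreliable round type. Equivalently, within each epoch all reliable states precede all unreliable states: an epoch starts with reliable rounds and contains at most one sequence of unreliable rounds. -/
import Mathlib


/-- Round types: `U` an unreliable round, `Uf` (i.e., U▷) the first unreliable
round following a reliable round, `R` a reliable round. -/
inductive RType
  | U
  | Uf
  | R
  deriving DecidableEq

/-- A state of the AllConcur+ state machine: epoch, round, round type. -/
structure ACState where
  epoch : ℕ
  round : ℕ
  rtype : RType
  deriving DecidableEq

instance : Inhabited ACState := ⟨⟨1, 0, RType.R⟩⟩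

/-- No-fail transitions: `tuu` (from `U` or `U▷`) and `trf`. -/
inductive ACNoFail : ACState → ACState → Prop
  | tuu (e r : ℕ) : ACNoFail ⟨e, r, RType.U⟩ ⟨e, r + 1, RType.U⟩
  | tuu' (e r : ℕ) : ACNoFail ⟨e, r, RType.Uf⟩ ⟨e, r + 1, RType.U⟩
  | trf (e r : ℕ) : ACNoFail ⟨e, r, RType.R⟩ ⟨e, r + 1, RType.Uf⟩

/-- Fail transitions: `tur`, `tfr`, `trr`. -/
inductive ACFail : ACState → ACState → Prop
  | tur (e r : ℕ) (h : 1 ≤ r) : ACFail ⟨e, r, RType.U⟩ ⟨e + 1, r - 1, RType.R⟩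
  | tfr (e r : ℕ) : ACFail ⟨e, r, RType.Uf⟩ ⟨e + 1, r, RType.R⟩
  | trr (e r : ℕ) : ACFail ⟨e, r, RType.R⟩ ⟨e + 1, r + 1, RType.R⟩

/-- The skip transition `tsk`. -/
inductive ACSkip : ACState → ACState → Prop
  | tsk (e r : ℕ) : ACSkip ⟨e, r, RType.R⟩ ⟨e, r + 1, RType.R⟩

/-- A transition of the AllConcur+ state machine. -/
def ACStep (s s' : ACState) : Prop :=
  ACNoFail s s' ∨ ACFail s s' ∨ ACSkip s s'

/-- The initial state `(1, 0, R)`. -/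
def ACInit : ACState := ⟨1, 0, RType.R⟩

/-- An execution: a finite sequence of states starting at the initial state in
which each consecutive pair is related by one of the transitions. -/
def IsExec (l : List ACState) : Prop :=
  l.head? = some ACInit ∧ List.Chain' ACStep l

lemma acstep_epoch_mono {s s' : ACState} (h : ACStep s s') : s.epoch ≤ s'.epoch := by
  rcases h with h | h | h <;> cases h <;> simp

lemma acstep_key {s s' : ACState} (h : ACStep s s') (hne : s.rtype ≠ RType.R)
    (he : s'.epoch ≤ s.epoch) : s'.rtype ≠ RType.R := by
  rcases h with h | h | h <;> cases h <;> simp_all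

lemma exec_epoch_mono (l : List ACState) (h : List.Chain' ACStep l) :
    ∀ i j : ℕ, ∀ hi : i < l.length, ∀ hj : j < l.length, i ≤ j →
      (l.get ⟨i, hi⟩).epoch ≤ (l.get ⟨j, hj⟩).epoch := by
  intro i j hi hj hij
  induction j with
  | zero =>
    have : i = 0 := Nat.le_zero.mp hij
    subst this; rfl
  | succ j ih =>
    have hj' : j < l.length := Nat.lt_of_succ_lt hj
    have step : ACStep (l.get ⟨j, hj'⟩) (l.get ⟨j + 1, hj⟩) :=
      List.isChain_iff_getElem.mp h j (by omega)
    rcases Nat.lt_or_ge i (j + 1) with hlt | hge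
    · exact le_trans (ih hj' (by omega)) (acstep_epoch_mono step)
    · have : i = j + 1 := le_antisymm hij hge
      subst this; rfl

/-- In any execution, if a state with epoch `e` and unreliable round type
(`U` or `U▷`) occurs at some position, then every later state of the execution
having epoch `e` also has unreliable round type: within each epoch all reliable
states precede all unreliable states. -/
theorem stmt_3 :
    ∀ l : List ACState, IsExec l → ∀ i j : ℕ, ∀ hi : i < l.length,
      ∀ hj : j < l.length, i ≤ j →
      (l.get ⟨i, hi⟩).rtype ≠ RType.R →
      (l.get ⟨j, hj⟩).epoch = (l.get ⟨i, hi⟩).epoch →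
      (l.get ⟨j, hj⟩).rtype ≠ RType.R := by
  intro l hexec i j hi hj hij hne heq
  induction j with
  | zero =>
    have : i = 0 := Nat.le_zero.mp hij
    subst this; exact hne
  | succ j ih =>
    have hj' : j < l.length := Nat.lt_of_succ_lt hj
    have step : ACStep (l.get ⟨j, hj'⟩) (l.get ⟨j + 1, hj⟩) :=
      List.isChain_iff_getElem.mp hexec.2 j (by omega)
    rcases Nat.lt_or_ge i (j + 1) with hlt | hge
    · have hij' : i ≤ j := by omega
      have h1 : (l.get ⟨i, hi⟩).epoch ≤ (l.get ⟨j, hj'⟩).epoch :=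
        exec_epoch_mono l hexec.2 i j hi hj' hij'
      have h2 : (l.get ⟨j, hj'⟩).epoch ≤ (l.get ⟨j + 1, hj⟩).epoch :=
        acstep_epoch_mono step
      have heq' : (l.get ⟨j, hj'⟩).epoch = (l.get ⟨i, hi⟩).epoch := by omega
      exact acstep_key step (ih hj' hij' heq') (by omega)
    · have : i = j + 1 := le_antisymm hij hge
      subst this; exact hne
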